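/- Let μ be supported on ℤ⁺ and μ' on ℤ⁻, with S_n = ξ_1 + ... + ξ_n the μ-random walk and U = Σ_{n≥0} μ^{*n} its potential kernel. For x < 0 and y ≥ 0, the probability that the oscillating walk started at x, moving by i.i.d. jumps with law μ while negative, first becomes nonnegative at the value y equals Σ_{t=0}^{-x-1} μ(y - x - t) U(t). -/

import Mathlib

open MeasureTheory

/-- First-passage distribution for the oscillating walk with positive jumps of law `μ`
from negative states: started at `x < 0`, the probability that the walk first becomes
nonnegative at the value `y ≥ 0` equals `∑_{t=0}^{-x-1} μ(y-x-t) U(t)`, where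
`U(t) = ∑_{n≥0} P[S_n = t]` is the potential kernel of the random walk `S`. -/
theorem stmt_6 {Ω : Type*} [MeasurableSpace Ω] (ℙ : Measure Ω) [IsProbabilityMeasure ℙ]
    (ξ : ℕ → Ω → ℤ) (hmeas : ∀ n, Measurable (ξ n))
    (hindep : ProbabilityTheory.iIndepFun ξ ℙ)
    (hident : ∀ n, Measure.map (ξ n) ℙ = Measure.map (ξ 0) ℙ)
    (hpos : ∀ n, ∀ᵐ ω ∂ℙ, 1 ≤ ξ n ω)
    (S : ℕ → Ω → ℤ) (hS : ∀ n ω, S n ω = ∑ i ∈ Finset.range n, ξ i ω)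
    (μ : ℤ → ENNReal) (hμ : ∀ z : ℤ, μ z = ℙ {ω | ξ 0 ω = z})
    (U : ℕ → ENNReal) (hU : ∀ t : ℕ, U t = ∑' n : ℕ, ℙ {ω | S n ω = (t : ℤ)})
    (x y : ℤ) (hx : x < 0) (hy : 0 ≤ y) :
    ℙ {ω | ∃ n : ℕ, x + S n ω ≤ -1 ∧ x + S (n + 1) ω = y}
      = ∑ t ∈ Finset.range (-x).toNat, μ (y - x - (t : ℤ)) * U t := by
  classical
  set N : ℕ := (-x).toNat with hN
  have hNx : (N : ℤ) = -x := Int.toNat_of_nonneg (by omega)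
  -- the good set
  set G : Set Ω := ⋂ n, {ω | 1 ≤ ξ n ω} with hGdef
  have hGmeas : MeasurableSet G :=
    MeasurableSet.iInter fun n => measurableSet_le measurable_const (hmeas n)
  have hGc : ℙ Gᶜ = 0 := by
    have h1 : ∀ᵐ ω ∂ℙ, ∀ n, 1 ≤ ξ n ω := ae_all_iff.2 hpos
    have : Gᶜ ⊆ {ω | ¬ ∀ n, 1 ≤ ξ n ω} := by
      intro ω hω
      simp only [hGdef, Set.compl_iInter, Set.mem_iUnion, Set.mem_compl_iff,
        Set.mem_setOf_eq] at hω ⊢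
      obtain ⟨n, hn⟩ := hω
      exact fun h => hn (h n)
    exact measure_mono_null this h1
  -- measurability of S
  have hSmeas : ∀ n, Measurable (S n) := by
    intro n
    have : S n = fun ω => ∑ i ∈ Finset.range n, ξ i ω := funext (hS n)
    rw [this]
    exact Finset.measurable_sum _ fun i _ => hmeas i
  -- monotonicity on G
  have hmono : ∀ ω ∈ G, ∀ m n : ℕ, m ≤ n → S m ω + (n - m : ℕ) ≤ S n ω := by
    intro ω hω m n hmn
    have hsum : ∑ i ∈ Finset.range m, ξ i ω + ∑ i ∈ Finset.Ico m n, ξ i ω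
        = ∑ i ∈ Finset.range n, ξ i ω := Finset.sum_range_add_sum_Ico _ hmn
    have hcard : ((Finset.Ico m n).card : ℤ) ≤ ∑ i ∈ Finset.Ico m n, ξ i ω := by
      have := Finset.card_nsmul_le_sum (Finset.Ico m n) (fun i => ξ i ω) 1
        (fun i _ => by
          have := Set.mem_iInter.1 hω i
          exact this)
      simpa using this
    rw [hS m ω, hS n ω, ← hsum]
    have : (Finset.Ico m n).card = n - m := Nat.card_Ico m n
    omega
  have hS0 : ∀ ω, S 0 ω = 0 := fun ω => by simp [hS]
  have hSnonneg : ∀ ω ∈ G, ∀ n, (0:ℤ) ≤ S n ω := by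
    intro ω hω n
    have := hmono ω hω 0 n (Nat.zero_le n)
    rw [hS0] at this; omega
  have hSsucc : ∀ n ω, S (n+1) ω = S n ω + ξ n ω := by
    intro n ω; rw [hS, hS, Finset.sum_range_succ]
  -- basic building blocks
  set B : ℕ → ℕ → Set Ω := fun n t =>
    (S n ⁻¹' {(t:ℤ)}) ∩ (ξ n ⁻¹' {y - x - (t:ℤ)}) with hBdef
  have hBmeas : ∀ n t, MeasurableSet (B n t) := fun n t =>
    ((hSmeas n) (measurableSet_singleton _)).inter ((hmeas n) (measurableSet_singleton _))
  set C : ℕ → Set Ω := fun n => ⋃ t ∈ Finset.range N, B n t ∩ G with hCdef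
  have hCmeas : ∀ n, MeasurableSet (C n) := fun n =>
    MeasurableSet.biUnion (Finset.range N).countable_toSet fun t _ => (hBmeas n t).inter hGmeas
  -- event decomposition
  set E : Set Ω := {ω | ∃ n : ℕ, x + S n ω ≤ -1 ∧ x + S (n + 1) ω = y} with hEdef
  have hdecomp : E ∩ G = ⋃ n, C n := by
    ext ω
    constructor
    · rintro ⟨⟨n, hn1, hn2⟩, hωG⟩
      have h0 : (0:ℤ) ≤ S n ω := hSnonneg ω hωG n
      have hlt : S n ω ≤ -1 - x := by omega
      refine Set.mem_iUnion.2 ⟨n, ?_⟩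
      refine Set.mem_iUnion.2 ⟨(S n ω).toNat, Set.mem_iUnion.2 ⟨?_, ?_, hωG⟩⟩
      · simp only [Finset.mem_range]
        omega
      · constructor
        · simp [Int.toNat_of_nonneg h0]
        · have := hSsucc n ω
          simp only [Set.mem_preimage, Set.mem_singleton_iff]
          rw [Int.toNat_of_nonneg h0]
          omega
    · intro hω
      obtain ⟨n, hn⟩ := Set.mem_iUnion.1 hω
      obtain ⟨t, ht⟩ := Set.mem_iUnion.1 hn
      obtain ⟨htN, hBt, hωG⟩ := Set.mem_iUnion.1 ht
      simp only [Finset.mem_range] at htN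
      obtain ⟨hSt, hξt⟩ := hBt
      simp only [Set.mem_preimage, Set.mem_singleton_iff] at hSt hξt
      refine ⟨⟨n, ?_, ?_⟩, hωG⟩
      · have : (t:ℤ) < N := by exact_mod_cast htN
        omega
      · rw [hSsucc n ω, hSt, hξt]; ring
  have hdisj0 : ∀ m n : ℕ, m < n → Disjoint (C m) (C n) := by
    intro m n hlt
    rw [Set.disjoint_left]
    intro ω hωm hωn
    obtain ⟨t, ht⟩ := Set.mem_iUnion.1 hωm
    obtain ⟨htN, hBt, hωG⟩ := Set.mem_iUnion.1 ht
    obtain ⟨s, hs⟩ := Set.mem_iUnion.1 hωn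
    obtain ⟨hsN, hBs, _⟩ := Set.mem_iUnion.1 hs
    simp only [Finset.mem_range] at htN hsN
    obtain ⟨hSt, hξt⟩ := hBt
    obtain ⟨hSs, _⟩ := hBs
    simp only [Set.mem_preimage, Set.mem_singleton_iff] at hSt hξt hSs
    -- S (m+1) ω = y - x ≥ -x > 0, but S n ω = s < N = -x and S (m+1) ≤ S n
    have h1 : S (m+1) ω = y - x := by rw [hSsucc m ω, hSt, hξt]; ring
    have h2 : S (m+1) ω ≤ S n ω := by
      have := hmono ω hωG (m+1) n hlt
      omega
    have h3 : (s:ℤ) < N := by exact_mod_cast hsN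
    rw [h1, hSs] at h2
    omega
  have hdisj : Pairwise (Function.onFun Disjoint C) := by
    intro m n hmn
    rcases lt_or_gt_of_ne hmn with h | h
    · exact hdisj0 m n h
    · exact (hdisj0 n m h).symm
  -- independence: ℙ (B n t) = ℙ {S n = t} * μ (y - x - t)
  have hBprob : ∀ n t, ℙ (B n t) = ℙ {ω | S n ω = (t:ℤ)} * μ (y - x - (t:ℤ)) := by
    intro n t
    have hind : ProbabilityTheory.IndepFun (S n) (ξ n) ℙ := by
      have h := hindep.indepFun_finsetSum_of_notMem hmeas
        (s := Finset.range n) (i := n) (by simp)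
      have : S n = ∑ j ∈ Finset.range n, ξ j := by
        funext ω; rw [hS]; simp
      rwa [← this] at h
    have hkey := hind.measure_inter_preimage_eq_mul {((t:ℕ):ℤ)} {y - x - (t:ℤ)}
      (measurableSet_singleton _) (measurableSet_singleton _)
    have hξn : ℙ (ξ n ⁻¹' {y - x - (t:ℤ)}) = μ (y - x - (t:ℤ)) := by
      have h1 : ℙ (ξ n ⁻¹' {y - x - (t:ℤ)}) = (Measure.map (ξ n) ℙ) {y - x - (t:ℤ)} :=
        (Measure.map_apply (hmeas n) (measurableSet_singleton _)).symm
      have h2 : ℙ (ξ 0 ⁻¹' {y - x - (t:ℤ)}) = (Measure.map (ξ 0) ℙ) {y - x - (t:ℤ)} :=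
        (Measure.map_apply (hmeas 0) (measurableSet_singleton _)).symm
      rw [h1, hident n, ← h2, hμ]
      rfl
    show ℙ (S n ⁻¹' {((t:ℕ):ℤ)} ∩ ξ n ⁻¹' {y - x - (t:ℤ)}) = _
    rw [hkey, hξn]
    rfl
  -- compute ℙ (C n)
  have hCprob : ∀ n, ℙ (C n) = ∑ t ∈ Finset.range N, ℙ {ω | S n ω = (t:ℤ)} * μ (y - x - (t:ℤ)) := by
    intro n
    have hdisjB : Set.PairwiseDisjoint (↑(Finset.range N)) (fun t => B n t ∩ G) := by
      intro s _ t _ hst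
      simp only [Function.onFun]
      rw [Set.disjoint_left]
      rintro ω ⟨⟨hS1, _⟩, _⟩ ⟨⟨hS2, _⟩, _⟩
      simp only [Set.mem_preimage, Set.mem_singleton_iff] at hS1 hS2
      exact hst (by exact_mod_cast hS1.symm.trans hS2)
    rw [hCdef]
    simp only
    rw [measure_biUnion_finset hdisjB fun t _ => (hBmeas n t).inter hGmeas]
    refine Finset.sum_congr rfl fun t _ => ?_
    rw [measure_inter_conull hGc, hBprob n t]
  -- put things together
  have hE : ℙ E = ℙ (E ∩ G) := (measure_inter_conull hGc).symm
  rw [show ℙ {ω | ∃ n : ℕ, x + S n ω ≤ -1 ∧ x + S (n + 1) ω = y} = ℙ E from rfl, hE, hdecomp,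
    measure_iUnion hdisj hCmeas]
  calc ∑' n, ℙ (C n)
      = ∑' n, ∑ t ∈ Finset.range N, ℙ {ω | S n ω = (t:ℤ)} * μ (y - x - (t:ℤ)) := by
        exact tsum_congr hCprob
    _ = ∑ t ∈ Finset.range N, ∑' n, ℙ {ω | S n ω = (t:ℤ)} * μ (y - x - (t:ℤ)) := by
        exact Summable.tsum_finsetSum fun t _ => ENNReal.summable
    _ = ∑ t ∈ Finset.range N, μ (y - x - (t:ℤ)) * U t := by
        refine Finset.sum_congr rfl fun t _ => ?_
        rw [hU, ← ENNReal.tsum_mul_left]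
        exact tsum_congr fun n => mul_comm _ _
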